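/- Let u : (0,1) → ℝ be measurable with Du ∈ L^∞((0,1)²), i.e., there is M ≥ 0 with |u(X)−u(x)| ≤ M|X−x| for a.e. (x,X) ∈ (0,1)². Then u has a Lipschitz representative on (0,1) with Lipschitz constant M; hence NW^{1,∞}(0,1) coincides with the space of (essentially) Lipschitz functions and ‖Du‖_{L^∞((0,1)²)} equals the optimal Lipschitz constant. -/

import Mathlib

open MeasureTheory Set Real Filter Topology
open scoped ENNReal NNReal

/-- Lebesgue measure restricted to the unit interval `(0,1)`. -/
noncomputable def muI : Measure ℝ := volume.restrict (Set.Ioo 0 1)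

/-- Product measure on the unit square `(0,1)²`. -/
noncomputable def muS : Measure (ℝ × ℝ) := muI.prod muI

/-- Nonlocal difference quotient `Du(x,X) = (u X - u x)/(X - x)`. -/
noncomputable def Du (u : ℝ → ℝ) : ℝ × ℝ → ℝ := fun p => (u p.2 - u p.1) / (p.2 - p.1)

instance : SFinite muI := by unfold muI; infer_instance

lemma muI_ae_mem : ∀ᵐ x ∂muI, x ∈ Set.Ioo (0:ℝ) 1 :=
  ae_restrict_mem measurableSet_Ioo

lemma muS_prod_ae {p : ℝ → Prop} (hp : ∀ᵐ x ∂muI, p x) :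
    ∀ᵐ z ∂muS, p z.1 ∧ p z.2 := by
  set T := toMeasurable muI {x | ¬ p x} with hT
  have hT0 : muI T = 0 := by
    rw [hT, measure_toMeasurable]; exact ae_iff.mp hp
  have hsub : {z : ℝ × ℝ | ¬ (p z.1 ∧ p z.2)} ⊆ (T ×ˢ univ) ∪ (univ ×ˢ T) := by
    intro z hz
    rw [mem_setOf_eq, not_and_or] at hz
    rcases hz with h1 | h2
    · exact Or.inl ⟨subset_toMeasurable _ _ h1, mem_univ _⟩
    · exact Or.inr ⟨mem_univ _, subset_toMeasurable _ _ h2⟩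
  rw [ae_iff]
  refine measure_mono_null hsub (le_antisymm ?_ zero_le)
  refine (measure_union_le _ _).trans ?_
  rw [muS, Measure.prod_prod, Measure.prod_prod, hT0]
  simp

lemma muI_singleton (x : ℝ) : muI {x} = 0 :=
  le_antisymm ((Measure.restrict_le_self _).trans_eq (measure_singleton x)) zero_le

lemma muS_ae_ne : ∀ᵐ z ∂muS, z.1 ≠ z.2 := by
  have hd : MeasurableSet {z : ℝ × ℝ | z.1 = z.2} :=
    (isClosed_eq continuous_fst continuous_snd).measurableSet
  have h0 : muS {z : ℝ × ℝ | z.1 = z.2} = 0 := by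
    rw [muS, Measure.measure_prod_null hd]
    filter_upwards with x
    have : (Prod.mk x ⁻¹' {z : ℝ × ℝ | z.1 = z.2}) = {x} := by
      ext y; simp [eq_comm]
    simp [this, muI_singleton]
  rw [ae_iff]
  refine measure_mono_null ?_ h0
  intro z hz
  simpa using hz

lemma key (u : ℝ → ℝ) (M : ℝ) (hM : 0 ≤ M)
    (h : ∀ᵐ z ∂muS, |u z.2 - u z.1| ≤ M * |z.2 - z.1|) :
    ∃ v : ℝ → ℝ, (∀ᵐ x ∂muI, v x = u x) ∧ LipschitzWith ⟨M, hM⟩ v := by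
  have h' : ∀ᵐ x ∂muI, ∀ᵐ X ∂muI, |u X - u x| ≤ M * |X - x| := by
    have := Measure.ae_ae_of_ae_prod (μ := muI) (ν := muI)
      (p := fun z => |u z.2 - u z.1| ≤ M * |z.2 - z.1|) h
    simpa using this
  set A : Set ℝ :=
    {x | x ∈ Set.Ioo (0:ℝ) 1 ∧ ∀ᵐ X ∂muI, |u X - u x| ≤ M * |X - x|} with hAdef
  have hAae : ∀ᵐ x ∂muI, x ∈ A := muI_ae_mem.and h'
  have main : ∀ x ∈ A, ∀ y ∈ A, x < y → |u x - u y| ≤ M * |x - y| := by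
    rintro x ⟨hxI, hx⟩ y ⟨hyI, hy⟩ hxy
    have hgood : ∃ X ∈ Set.Ioo x y,
        |u X - u x| ≤ M * |X - x| ∧ |u X - u y| ≤ M * |X - y| := by
      by_contra hemp
      have hsub : Set.Ioo x y ⊆
          {X | ¬(|u X - u x| ≤ M * |X - x| ∧ |u X - u y| ≤ M * |X - y|)} := by
        intro X hX hP
        exact hemp ⟨X, hX, hP.1, hP.2⟩
      have h0 : muI (Set.Ioo x y) = 0 :=
        measure_mono_null hsub (ae_iff.mp (hx.and hy))
      have h1 : muI (Set.Ioo x y) = ENNReal.ofReal (y - x) := by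
        have hss : Set.Ioo x y ⊆ Set.Ioo (0:ℝ) 1 :=
          fun t ht => ⟨lt_trans hxI.1 ht.1, lt_trans ht.2 hyI.2⟩
        rw [muI, Measure.restrict_apply measurableSet_Ioo,
          Set.inter_eq_left.mpr hss, Real.volume_Ioo]
      rw [h1, ENNReal.ofReal_eq_zero] at h0
      linarith
    obtain ⟨X, hX, h1, h2⟩ := hgood
    have e1 : |X - x| = X - x := abs_of_pos (by linarith [hX.1])
    have e2 : |X - y| = -(X - y) := abs_of_neg (by linarith [hX.2])
    have e3 : |x - y| = -(x - y) := abs_of_neg (by linarith)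
    calc |u x - u y| ≤ |u x - u X| + |u X - u y| := abs_sub_le _ _ _
      _ = |u X - u x| + |u X - u y| := by rw [abs_sub_comm (u x)]
      _ ≤ M * |X - x| + M * |X - y| := add_le_add h1 h2
      _ = M * |x - y| := by rw [e1, e2, e3]; ring
  have hlip : LipschitzOnWith ⟨M, hM⟩ u A := by
    refine lipschitzOnWith_iff_dist_le_mul.2 ?_
    intro x hx y hy
    rcases lt_trichotomy x y with hlt | heq | hlt
    · rw [Real.dist_eq, Real.dist_eq]; exact main x hx y hy hlt
    · simp [heq]
    · have := main y hy x hx hlt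
      rw [Real.dist_eq, Real.dist_eq, abs_sub_comm (u x), abs_sub_comm x]
      exact this
  obtain ⟨g, hg, hgu⟩ := hlip.extend_real
  exact ⟨g, hAae.mono fun x hx => (hgu hx).symm, hg⟩

/-- If `|u(X)−u(x)| ≤ M|X−x|` for a.e. `(x,X) ∈ (0,1)²` (i.e. `Du ∈ L^∞` with bound
`M`), then `u` has a Lipschitz representative on `(0,1)` with Lipschitz constant `M`;
moreover `‖Du‖_{L^∞((0,1)²)}` equals the optimal Lipschitz constant of representatives. -/
theorem stmt19 (u : ℝ → ℝ) (hmeas : Measurable u)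
    (M : ℝ) (hM : 0 ≤ M)
    (h : ∀ᵐ z ∂muS, |u z.2 - u z.1| ≤ M * |z.2 - z.1|) :
    (∃ v : ℝ → ℝ, (∀ᵐ x ∂muI, v x = u x) ∧
      ∀ x ∈ Set.Ioo (0:ℝ) 1, ∀ y ∈ Set.Ioo (0:ℝ) 1, |v x - v y| ≤ M * |x - y|) ∧
    eLpNorm (Du u) ∞ muS
      = sInf {C : ℝ≥0∞ | ∃ v : ℝ → ℝ, (∀ᵐ x ∂muI, v x = u x) ∧
          ∀ x ∈ Set.Ioo (0:ℝ) 1, ∀ y ∈ Set.Ioo (0:ℝ) 1,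
            ENNReal.ofReal |v x - v y| ≤ C * ENNReal.ofReal |x - y|} := by
  constructor
  · obtain ⟨v, hv, hlip⟩ := key u M hM h
    refine ⟨v, hv, fun x _ y _ => ?_⟩
    have := hlip.dist_le_mul x y; rw [Real.dist_eq, Real.dist_eq] at this; exact this
  · apply le_antisymm
    · apply le_sInf
      rintro C ⟨v, hv, hC⟩
      rcases eq_top_or_lt_top C with rfl | hCt
      · exact le_top
      have hae : ∀ᵐ z ∂muS, ‖Du u z‖ ≤ C.toReal := by
        filter_upwards [muS_prod_ae (hv.and muI_ae_mem), muS_ae_ne] with z hz hne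
        obtain ⟨⟨hv1, hz1⟩, hv2, hz2⟩ := hz
        have hb := hC z.1 hz1 z.2 hz2
        have hb' : |v z.1 - v z.2| ≤ C.toReal * |z.1 - z.2| := by
          rw [ENNReal.ofReal_le_iff_le_toReal
            (ENNReal.mul_ne_top hCt.ne ENNReal.ofReal_ne_top)] at hb
          rwa [ENNReal.toReal_mul, ENNReal.toReal_ofReal (abs_nonneg _)] at hb
        have hne' : z.2 - z.1 ≠ 0 := sub_ne_zero.mpr hne.symm
        have hgoal : |u z.2 - u z.1| ≤ C.toReal * |z.2 - z.1| := by
          rw [← hv1, ← hv2, abs_sub_comm (v z.2), abs_sub_comm z.2]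
          exact hb'
        simp only [Du, Real.norm_eq_abs]
        rw [abs_div, div_le_iff₀ (abs_pos.mpr hne')]
        exact hgoal
      calc eLpNorm (Du u) ∞ muS
          ≤ muS Set.univ ^ (∞ : ℝ≥0∞).toReal⁻¹ * ENNReal.ofReal C.toReal :=
            eLpNorm_le_of_ae_bound hae
        _ = C := by
            simp [ENNReal.ofReal_toReal hCt.ne]
    · set L := eLpNorm (Du u) ∞ muS with hL
      rcases eq_top_or_lt_top L with hLt | hLt
      · exact hLt ▸ le_top
      refine sInf_le_of_le ?_ le_rfl
      have hbound : ∀ᵐ z ∂muS, |u z.2 - u z.1| ≤ L.toReal * |z.2 - z.1| := by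
        filter_upwards [ae_le_eLpNormEssSup (f := Du u) (μ := muS), muS_ae_ne] with z hz hne
        have hz' : (‖Du u z‖₊ : ℝ≥0∞) ≤ L := by
          rw [hL, eLpNorm_exponent_top]; exact_mod_cast hz
        have hr : ‖Du u z‖ ≤ L.toReal := by
          have := ENNReal.toReal_mono hLt.ne hz'
          simpa using this
        have hne' : z.2 - z.1 ≠ 0 := sub_ne_zero.mpr hne.symm
        simp only [Du, Real.norm_eq_abs] at hr
        rw [abs_div, div_le_iff₀ (abs_pos.mpr hne')] at hr
        exact hr
      obtain ⟨v, hv, hlip⟩ := key u L.toReal ENNReal.toReal_nonneg hbound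
      refine ⟨v, hv, fun x _ y _ => ?_⟩
      have hd : |v x - v y| ≤ L.toReal * |x - y| := by
        have := hlip.dist_le_mul x y; rw [Real.dist_eq, Real.dist_eq] at this; exact this
      calc ENNReal.ofReal |v x - v y| ≤ ENNReal.ofReal (L.toReal * |x - y|) :=
            ENNReal.ofReal_le_ofReal hd
        _ = L * ENNReal.ofReal |x - y| := by
            rw [ENNReal.ofReal_mul ENNReal.toReal_nonneg, ENNReal.ofReal_toReal hLt.ne]
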